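/- Fix a positive integer k and let A be the set of all positive multiples of k. Then the number of compositions of n with no part in A (i.e., no part divisible by k) equals f_n, where f_j = 2^{j-1} for 1 ≤ j ≤ k-1, f_k = 2^{k-1} - 1, and f_j = f_{j-1} + f_{j-2} + ... + f_{j-k} for j > k. -/

import Mathlib

noncomputable def compCount (A : Set ℕ) (n : ℕ) : ℕ :=
  Nat.card {l : List ℕ // l.sum = n ∧ ∀ x ∈ l, 0 < x ∧ x ∈ A}

def TT (A : Set ℕ) (m : ℕ) : Type := {l : List ℕ // l.sum = m ∧ ∀ x ∈ l, 0 < x ∧ x ∈ A}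

lemma compCount_eq_card_TT (A : Set ℕ) (n : ℕ) : compCount A n = Nat.card (TT A n) := rfl

lemma finite_TT (A : Set ℕ) (n : ℕ) : Finite (TT A n) := by
  have : Function.Injective
      (fun l : TT A n =>
        (⟨l.1, @fun i hi => (l.2.2 i hi).1, l.2.1⟩ : Composition n)) := by
    intro a b h
    exact Subtype.ext (congrArg Composition.blocks h)
  exact Finite.of_injective _ this

lemma compCount_zero (A : Set ℕ) : compCount A 0 = 1 := by
  rw [compCount_eq_card_TT]
  have huniq : ∀ l : TT A 0, l = ⟨[], by simp⟩ := by
    rintro ⟨l, hs, hp⟩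
    have : l = [] := by
      cases l with
      | nil => rfl
      | cons a t =>
        exfalso
        have := (hp a (by simp)).1
        simp [List.sum_cons] at hs
        omega
    subst this; rfl
  have hss : Subsingleton (TT A 0) := ⟨fun a b => (huniq a).trans (huniq b).symm⟩
  have hne : Nonempty (TT A 0) := ⟨⟨[], by simp⟩⟩
  exact Nat.card_eq_one_iff_unique.mpr ⟨hss, hne⟩

open Classical in
lemma cons_mem_TT (A : Set ℕ) (n : ℕ) (a : ℕ)
    (ha : a ∈ (Finset.Icc 1 (n+1)).filter (fun a => 0 < a ∧ a ∈ A))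
    (l : TT A (n+1-a)) :
    (a :: l.1).sum = n+1 ∧ ∀ x ∈ (a :: l.1), 0 < x ∧ x ∈ A := by
  obtain ⟨hmem, hA⟩ := Finset.mem_filter.mp ha
  obtain ⟨h1, h2⟩ := Finset.mem_Icc.mp hmem
  constructor
  · have := l.2.1
    simp only [List.sum_cons, this]
    omega
  · intro x hx
    rcases List.mem_cons.mp hx with h | h
    · subst h; exact hA
    · exact l.2.2 x h

open Classical in
lemma compCount_succ (A : Set ℕ) (n : ℕ) :
    compCount A (n+1) = ∑ a ∈ Finset.Icc 1 (n+1),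
      if (0 < a ∧ a ∈ A) then compCount A (n+1-a) else 0 := by
  classical
  set s : Finset ℕ := (Finset.Icc 1 (n+1)).filter (fun a => 0 < a ∧ a ∈ A) with hs
  let g : (Σ a : s, TT A (n+1-(a:ℕ))) → TT A (n+1) :=
    fun p => ⟨(p.1 : ℕ) :: p.2.1, cons_mem_TT A n p.1 p.1.2 p.2⟩
  have hbij : Function.Bijective g := by
    constructor
    · rintro ⟨⟨a, ha⟩, ⟨l, hl⟩⟩ ⟨⟨b, hb⟩, ⟨m, hm⟩⟩ h
      have hval : (a : ℕ) :: l = (b : ℕ) :: m := congrArg Subtype.val h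
      simp only [List.cons.injEq] at hval
      obtain ⟨h1, h2⟩ := hval
      subst h1; subst h2; rfl
    · rintro ⟨l, hsum, hall⟩
      cases l with
      | nil => simp at hsum
      | cons a t =>
        have ha1 : 0 < a ∧ a ∈ A := hall a (by simp)
        have hsum' : a + t.sum = n + 1 := by simpa using hsum
        have has : a ∈ s := by
          rw [hs, Finset.mem_filter, Finset.mem_Icc]
          exact ⟨⟨ha1.1, by omega⟩, ha1⟩
        refine ⟨⟨⟨a, has⟩, ⟨t, show t.sum = n+1-a by omega,
          fun x hx => hall x (by simp [hx])⟩⟩, rfl⟩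
  have hfin : ∀ m, Finite (TT A m) := fun m => finite_TT A m
  have inst : ∀ a : s, Fintype (TT A (n+1-(a:ℕ))) := fun a => Fintype.ofFinite _
  have e : (Σ a : s, TT A (n+1-(a:ℕ))) ≃ TT A (n+1) := Equiv.ofBijective g hbij
  have hcard : compCount A (n+1) = Nat.card (Σ a : s, TT A (n+1-(a:ℕ))) := by
    rw [compCount_eq_card_TT]
    exact (Nat.card_congr e).symm
  rw [hcard]
  have h2 : Nat.card (Σ a : s, TT A (n+1-(a:ℕ))) = ∑ a : s, Nat.card (TT A (n+1-(a:ℕ))) := by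
    rw [Nat.card_eq_fintype_card, Fintype.card_sigma]
    congr 1
    ext a
    rw [Nat.card_eq_fintype_card]
  rw [h2]
  have h3 : ∑ a : s, Nat.card (TT A (n+1-(a:ℕ))) = ∑ a ∈ s, compCount A (n+1-a) :=
    Finset.sum_coe_sort s (fun a => compCount A (n+1-a))
  rw [h3, hs, Finset.sum_filter]

def cfun (k : ℕ) : ℕ → ℕ
  | 0 => 1
  | n+1 => ∑ a ∈ (Finset.Icc 1 (n+1)).attach,
      if ¬ k ∣ (a : ℕ) then cfun k (n+1 - (a : ℕ)) else 0
  decreasing_by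
    have := Finset.mem_Icc.mp a.2
    omega

lemma cfun_succ (k n : ℕ) :
    cfun k (n+1) = ∑ a ∈ Finset.Icc 1 (n+1),
      if ¬ k ∣ a then cfun k (n+1-a) else 0 := by
  rw [cfun]
  exact Finset.sum_attach (Finset.Icc 1 (n+1)) (fun a => if ¬ k ∣ a then cfun k (n+1-a) else 0)

lemma compCount_eq_cfun (k : ℕ) (n : ℕ) :
    compCount {x | 0 < x ∧ ¬ k ∣ x} n = cfun k n := by
  induction n using Nat.strong_induction_on with
  | _ n ih =>
    match n with
    | 0 => rw [compCount_zero, cfun]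
    | n+1 =>
      rw [compCount_succ, cfun_succ]
      apply Finset.sum_congr rfl
      intro a ha
      obtain ⟨h1, h2⟩ := Finset.mem_Icc.mp ha
      have hmem : (0 < a ∧ a ∈ {x | 0 < x ∧ ¬ k ∣ x}) ↔ ¬ k ∣ a := by
        simp only [Set.mem_setOf_eq]
        constructor
        · tauto
        · intro h; exact ⟨h1, h1, h⟩
      by_cases hd : k ∣ a
      · rw [if_neg (by tauto), if_neg (by tauto)]
      · rw [if_pos (hmem.mpr hd), if_pos hd]
        exact ih (n+1-a) (by omega)

def Pfun (k n : ℕ) : ℕ := ∑ m ∈ Finset.range n, cfun k m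
def Qfun (k n : ℕ) : ℕ := ∑ j ∈ Finset.Icc 1 (n / k), cfun k (n - j * k)

lemma P_split (k n : ℕ) (h : k ≤ n) :
    Pfun k n = Pfun k (n-k) + ∑ i ∈ Finset.Icc 1 k, cfun k (n-i) := by
  unfold Pfun
  rw [Finset.range_eq_Ico,
    ← Finset.sum_Ico_consecutive _ (Nat.zero_le (n-k)) (Nat.sub_le n k)]
  congr 1
  · rw [Finset.range_eq_Ico]
  refine Finset.sum_nbij' (fun m => n - m) (fun i => n - i) ?_ ?_ ?_ ?_ ?_
  · intro a ha; have := Finset.mem_Ico.mp ha; rw [Finset.mem_Icc]; omega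
  · intro a ha; have := Finset.mem_Icc.mp ha; rw [Finset.mem_Ico]; omega
  · intro a ha; have := Finset.mem_Ico.mp ha; omega
  · intro a ha; have := Finset.mem_Icc.mp ha; omega
  · intro a ha; have := Finset.mem_Ico.mp ha
    congr 1; omega

lemma PQ_eq (k n : ℕ) (hk : 1 ≤ k) (hn : 1 ≤ n) :
    cfun k n + Qfun k n = Pfun k n := by
  obtain ⟨m, rfl⟩ : ∃ m, n = m + 1 := ⟨n - 1, by omega⟩
  rw [cfun_succ]
  have hQ : Qfun k (m+1) = ∑ a ∈ Finset.Icc 1 (m+1),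
      if k ∣ a then cfun k (m+1-a) else 0 := by
    rw [← Finset.sum_filter]
    unfold Qfun
    refine Finset.sum_nbij' (fun j => j * k) (fun a => a / k) ?_ ?_ ?_ ?_ ?_
    · intro j hj
      have := Finset.mem_Icc.mp hj
      rw [Finset.mem_filter, Finset.mem_Icc]
      refine ⟨⟨?_, ?_⟩, dvd_mul_left k j⟩
      · calc 1 ≤ j := this.1
          _ ≤ j * k := Nat.le_mul_of_pos_right j hk
      · calc j * k ≤ (m+1)/k * k := Nat.mul_le_mul_right k this.2
          _ ≤ m+1 := Nat.div_mul_le_self _ _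
    · intro a ha
      obtain ⟨hmem, hdvd⟩ := Finset.mem_filter.mp ha
      obtain ⟨h1, h2⟩ := Finset.mem_Icc.mp hmem
      rw [Finset.mem_Icc]
      exact ⟨Nat.one_le_div_iff hk |>.mpr (Nat.le_of_dvd (by omega) hdvd),
        Nat.div_le_div_right h2⟩
    · intro j hj
      exact Nat.mul_div_cancel j hk
    · intro a ha
      obtain ⟨hmem, hdvd⟩ := Finset.mem_filter.mp ha
      exact Nat.div_mul_cancel hdvd
    · intro j hj; dsimp only
  rw [hQ, ← Finset.sum_add_distrib]
  have : ∀ a ∈ Finset.Icc 1 (m+1),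
      ((if ¬ k ∣ a then cfun k (m+1-a) else 0) + (if k ∣ a then cfun k (m+1-a) else 0))
        = cfun k (m+1-a) := by
    intro a _
    by_cases hd : k ∣ a <;> simp [hd]
  rw [Finset.sum_congr rfl this]
  unfold Pfun
  refine Finset.sum_nbij' (fun a => m + 1 - a) (fun b => m + 1 - b) ?_ ?_ ?_ ?_ ?_
  · intro a ha; have := Finset.mem_Icc.mp ha; rw [Finset.mem_range]; omega
  · intro a ha; have := Finset.mem_range.mp ha; rw [Finset.mem_Icc]; omega
  · intro a ha; have := Finset.mem_Icc.mp ha; omega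
  · intro a ha; have := Finset.mem_range.mp ha; omega
  · intro a ha; dsimp only

lemma Q_small (k n : ℕ) (h : n < k) : Qfun k n = 0 := by
  unfold Qfun
  rw [Nat.div_eq_of_lt h]
  rfl

lemma Q_rec (k n : ℕ) (hk : 1 ≤ k) (h : k ≤ n) :
    Qfun k n = cfun k (n - k) + Qfun k (n - k) := by
  unfold Qfun
  have hdiv : 1 ≤ n / k := (Nat.one_le_div_iff hk).mpr h
  have hsub : (n - k) / k = n / k - 1 := by
    obtain ⟨m, rfl⟩ := Nat.exists_eq_add_of_le h
    rw [Nat.add_sub_cancel_left, Nat.add_comm k m, Nat.add_div_right _ hk]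
    exact (Nat.add_sub_cancel _ _).symm
  have hsplit : Finset.Icc 1 (n / k) = insert 1 (Finset.Icc 2 (n / k)) := by
    ext x
    simp only [Finset.mem_Icc, Finset.mem_insert]
    omega
  rw [hsplit, Finset.sum_insert (by rw [Finset.mem_Icc]; omega), one_mul]
  congr 1
  rw [hsub]
  refine Finset.sum_nbij' (fun j => j - 1) (fun j => j + 1) ?_ ?_ ?_ ?_ ?_
  · intro a ha; have := Finset.mem_Icc.mp ha; rw [Finset.mem_Icc]; omega
  · intro a ha; have := Finset.mem_Icc.mp ha; rw [Finset.mem_Icc]; omega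
  · intro a ha; have := Finset.mem_Icc.mp ha; omega
  · intro a ha; have := Finset.mem_Icc.mp ha; omega
  · intro a ha; have := Finset.mem_Icc.mp ha
    congr 1
    have : (a - 1) * k = a * k - k := by
      cases a with
      | zero => omega
      | succ t => simp [Nat.succ_mul]
    rw [this]
    have hak : k ≤ a * k := Nat.le_mul_of_pos_left k (by omega)
    omega

lemma cfun_small (k n : ℕ) (hk : 1 ≤ k) (h1 : 1 ≤ n) (h2 : n < k) :
    cfun k n = Pfun k n := by
  have := PQ_eq k n hk h1
  rw [Q_small k n h2] at this
  omega

lemma cfun_at_k (k : ℕ) (hk : 1 ≤ k) : cfun k k + 1 = Pfun k k := by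
  have h1 := PQ_eq k k hk hk
  rw [Q_rec k k hk le_rfl, Nat.sub_self] at h1
  rw [Q_small k 0 hk] at h1
  have : cfun k 0 = 1 := by rw [cfun]
  omega

lemma cfun_rec (k n : ℕ) (hk : 1 ≤ k) (h : k < n) :
    cfun k n = ∑ i ∈ Finset.Icc 1 k, cfun k (n - i) := by
  have h1 := PQ_eq k n hk (by omega)
  rw [Q_rec k n hk (by omega)] at h1
  have h2 := PQ_eq k (n - k) hk (by omega)
  have h3 := P_split k n (by omega)
  omega

lemma geom_aux (t : ℕ) : 1 + ∑ m ∈ Finset.Icc 1 t, 2^(m-1) = 2^t := by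
  induction t with
  | zero => simp
  | succ t iht =>
    rw [Finset.sum_Icc_succ_top (by omega : 1 ≤ t + 1)]
    have h1 : t + 1 - 1 = t := by omega
    rw [h1, pow_succ]
    omega

lemma P_expand (k n : ℕ) (h : 1 ≤ n) :
    Pfun k n = 1 + ∑ m ∈ Finset.Icc 1 (n-1), cfun k m := by
  obtain ⟨t, rfl⟩ : ∃ t, n = t + 1 := ⟨n - 1, by omega⟩
  unfold Pfun
  rw [Finset.range_eq_Ico, Finset.sum_eq_sum_Ico_succ_bot (by omega : 0 < t + 1),
    Finset.Ico_add_one_right_eq_Icc]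
  have h0 : cfun k 0 = 1 := by rw [cfun]
  rw [h0]
  congr 1

theorem compositions_avoiding_multiples_of_k (k : ℕ) (hk : 1 ≤ k) (f : ℕ → ℕ)
    (h1 : ∀ j, 1 ≤ j → j ≤ k - 1 → f j = 2 ^ (j - 1))
    (h2 : f k = 2 ^ (k - 1) - 1)
    (h3 : ∀ j, k < j → f j = ∑ i ∈ Finset.Icc 1 k, f (j - i)) :
    ∀ n, 1 ≤ n → compCount {x | 0 < x ∧ ¬ k ∣ x} n = f n := by
  suffices H : ∀ n, 1 ≤ n → cfun k n = f n by
    intro n hn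
    rw [compCount_eq_cfun]
    exact H n hn
  intro n
  induction n using Nat.strong_induction_on with
  | _ n ih =>
    intro hn
    rcases lt_trichotomy n k with hlt | heq | hgt
    · rw [h1 n hn (by omega)]
      rw [cfun_small k n hk hn hlt, P_expand k n hn]
      have hs : ∀ m ∈ Finset.Icc 1 (n-1), cfun k m = 2^(m-1) := by
        intro m hm
        have := Finset.mem_Icc.mp hm
        rw [ih m (by omega) (by omega), h1 m (by omega) (by omega)]
      rw [Finset.sum_congr rfl hs]
      exact geom_aux (n-1)
    · subst heq
      rw [h2]
      have hck := cfun_at_k n hk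
      rw [P_expand n n hk] at hck
      have hs : ∀ m ∈ Finset.Icc 1 (n-1), cfun n m = 2^(m-1) := by
        intro m hm
        have := Finset.mem_Icc.mp hm
        rw [ih m (by omega) (by omega), h1 m (by omega) (by omega)]
      rw [Finset.sum_congr rfl hs, geom_aux (n-1)] at hck
      have : 1 ≤ 2^(n-1) := Nat.one_le_two_pow
      omega
    · rw [h3 n hgt, cfun_rec k n hk hgt]
      refine Finset.sum_congr rfl fun i hi => ?_
      have := Finset.mem_Icc.mp hi
      exact ih (n-i) (by omega) (by omega)
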